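/- Let M, N be positive integers and let f : {0,…,M−1} → {0,…,N−1} be the map f(x) = x mod N. Set r = M/N (a positive real). Then (1/2)·Σ_{b=0}^{N−1} | |f⁻¹(b)|/M − 1/N | = 1 − r + 2⌊r⌋ − ⌊r⌋/r − ⌊r⌋²/r, and consequently this quantity is at most N/(4M); in particular f is an (N/(4M))-uniform map. -/
import Mathlib


open BigOperators Finset

/-- A map `f : A → B` between nonempty finite sets is `ε`-uniform if
`(1/2)·Σ_{b∈B} | |f⁻¹(b)|/|A| − 1/|B| | ≤ ε`. -/
def IsUniformMap {A B : Type*} [Fintype A] [Fintype B] [DecidableEq B]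
    (f : A → B) (ε : ℝ) : Prop :=
  (1 / 2) * ∑ b : B,
      |((Finset.univ.filter (fun a => f a = b)).card : ℝ) / (Fintype.card A)
        - 1 / (Fintype.card B)| ≤ ε

-- cardinality of the fibers of mod map
lemma fiber_card (M N : ℕ) (hN : 0 < N) (f : Fin M → Fin N)
    (hf : ∀ x : Fin M, (f x : ℕ) = (x : ℕ) % N) (b : Fin N) :
    (Finset.univ.filter (fun x : Fin M => f x = b)).card
      = (if (b : ℕ) < M % N then M / N + 1 else M / N) := by
  set c : ℕ := if (b : ℕ) < M % N then M / N + 1 else M / N with hc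
  have hcM : ∀ k < c, (b : ℕ) + k * N < M := by
    intro k hk
    have hb : (b : ℕ) < N := b.isLt
    have hMeq := Nat.mod_add_div' M N
    split_ifs at hc with h
    · have hk' : k ≤ M / N := by omega
      have h2 : k * N ≤ (M / N) * N := Nat.mul_le_mul_right N hk'
      have h3 : (b : ℕ) + k * N < M % N + k * N := Nat.add_lt_add_right h _
      linarith
    · have hk' : k + 1 ≤ M / N := by omega
      have h2 : (k + 1) * N ≤ (M / N) * N := Nat.mul_le_mul_right N hk'
      have h3 : (b : ℕ) + k * N < (k + 1) * N := by
        rw [add_mul, one_mul]; exact Nat.add_lt_add_right hb _ |>.trans_le (by linarith)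
      linarith [Nat.zero_le (M % N)]
  refine Eq.trans ?_ (Finset.card_range c)
  refine Finset.card_bij' (s := Finset.univ.filter (fun x : Fin M => f x = b))
    (t := Finset.range c) (fun x _ => (x : ℕ) / N)
    (fun k hk => (⟨(b : ℕ) + k * N, hcM k (Finset.mem_range.mp hk)⟩ : Fin M)) ?_ ?_ ?_ ?_
  · intro x hx
    simp only [Finset.mem_filter, Finset.mem_univ, true_and] at hx
    have hxb : (x : ℕ) % N = (b : ℕ) := by
      rw [← hf x, hx]
    rw [Finset.mem_range]
    have hdm := Nat.mod_add_div (x : ℕ) N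
    have hxM : (x : ℕ) < M := x.isLt
    have hMeq := Nat.mod_add_div M N
    have hle : (x : ℕ) / N ≤ M / N := Nat.div_le_div_right (le_of_lt hxM)
    show (x : ℕ) / N < c
    rw [hc]
    split_ifs with h
    · exact Nat.lt_succ_of_le hle
    · rcases Nat.lt_or_ge ((x:ℕ)/N) (M/N) with h1 | h1
      · exact h1
      · exfalso
        have hxq : (x : ℕ) / N = M / N := le_antisymm hle h1
        rw [hxb, hxq] at hdm
        have hbs : M % N ≤ (b : ℕ) := Nat.not_lt.mp h
        have hMx : M ≤ (x : ℕ) := by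
          calc M = M % N + N * (M / N) := hMeq.symm
            _ ≤ (b : ℕ) + N * (M / N) := Nat.add_le_add_right hbs _
            _ = (x : ℕ) := hdm
        exact absurd hxM (not_lt.mpr hMx)
  · intro k hk
    simp only [Finset.mem_filter, Finset.mem_univ, true_and]
    have hb : (b : ℕ) < N := b.isLt
    have : ((⟨(b : ℕ) + k * N, hcM k (Finset.mem_range.mp hk)⟩ : Fin M) : ℕ) % N = (b : ℕ) := by
      simp [Nat.add_mul_mod_self_right, Nat.mod_eq_of_lt hb]
    have hfx := hf (⟨(b : ℕ) + k * N, hcM k (Finset.mem_range.mp hk)⟩ : Fin M)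
    apply Fin.ext
    rw [hfx, this]
  · intro x hx
    simp only [Finset.mem_filter, Finset.mem_univ, true_and] at hx
    have hxb : (x : ℕ) % N = (b : ℕ) := by rw [← hf x, hx]
    apply Fin.ext
    simp only []
    rw [← hxb]
    exact Nat.mod_add_div' (x : ℕ) N
  · intro k hk
    simp only []
    rw [Nat.add_mul_div_right _ _ hN, Nat.div_eq_of_lt b.isLt, zero_add]

lemma floor_ratio (M N : ℕ) (hN : 0 < N) : ⌊(M : ℝ) / (N : ℝ)⌋ = (M / N : ℕ) := by
  have hN' : (0:ℝ) < N := by exact_mod_cast hN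
  have h1 : (M:ℝ) = N * ((M / N : ℕ) : ℝ) + ((M % N : ℕ) : ℝ) := by
    exact_mod_cast (Nat.div_add_mod M N).symm
  have h2 : ((M % N : ℕ) : ℝ) < N := by exact_mod_cast Nat.mod_lt M hN
  have h3 : (0:ℝ) ≤ ((M % N : ℕ) : ℝ) := by positivity
  rw [Int.floor_eq_iff]
  have hd := Nat.div_add_mod M N
  have hm := Nat.mod_lt M hN
  constructor
  · rw [Int.cast_natCast, le_div_iff₀ hN']
    exact_mod_cast Nat.div_mul_le_self M N
  · rw [div_lt_iff₀ hN', Int.cast_natCast]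
    have : M < (M / N + 1) * N := by
      rw [add_mul, one_mul]
      have : M / N * N = N * (M / N) := Nat.mul_comm _ _
      omega
    exact_mod_cast this

theorem mod_map_is_uniform (M N : ℕ) (hM : 0 < M) (hN : 0 < N)
    (f : Fin M → Fin N) (hf : ∀ x : Fin M, (f x : ℕ) = (x : ℕ) % N)
    (r : ℝ) (hr : r = (M : ℝ) / (N : ℝ)) :
    ((1 / 2) * ∑ b : Fin N,
        |((Finset.univ.filter (fun x : Fin M => f x = b)).card : ℝ) / (M : ℝ)
          - 1 / (N : ℝ)|
      = 1 - r + 2 * (⌊r⌋ : ℝ) - (⌊r⌋ : ℝ) / r - (⌊r⌋ : ℝ) ^ 2 / r)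
    ∧ (1 - r + 2 * (⌊r⌋ : ℝ) - (⌊r⌋ : ℝ) / r - (⌊r⌋ : ℝ) ^ 2 / r
        ≤ (N : ℝ) / (4 * (M : ℝ)))
    ∧ IsUniformMap f ((N : ℝ) / (4 * (M : ℝ))) := by
  set q : ℕ := M / N with hq
  set s : ℕ := M % N with hs
  have hMN : M = q * N + s := by rw [hq, hs]; exact (Nat.div_add_mod' M N).symm
  have hsN : s < N := Nat.mod_lt M hN
  have hM' : (0:ℝ) < M := by exact_mod_cast hM
  have hN' : (0:ℝ) < N := by exact_mod_cast hN
  have hMR : (M : ℝ) = q * N + s := by exact_mod_cast congrArg (Nat.cast (R := ℝ)) hMN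
  have hsN' : (s : ℝ) < N := by exact_mod_cast hsN
  have hs0' : (0:ℝ) ≤ s := by positivity
  have hsR : (s : ℝ) = (M : ℝ) - q * N := by linarith
  have hfloor : (⌊r⌋ : ℝ) = (q : ℝ) := by
    rw [hr, floor_ratio M N hN, hq]
    norm_cast
  -- the key value
  have key : 1 - r + 2 * (⌊r⌋ : ℝ) - (⌊r⌋ : ℝ) / r - (⌊r⌋ : ℝ) ^ 2 / r
      = (s : ℝ) * ((N : ℝ) - s) / ((M : ℝ) * N) := by
    rw [hfloor, hr, hsR]
    field_simp
    ring
  have hsum : ∑ b : Fin N,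
        |((Finset.univ.filter (fun x : Fin M => f x = b)).card : ℝ) / (M : ℝ)
          - 1 / (N : ℝ)|
      = 2 * ((s : ℝ) * ((N : ℝ) - s) / ((M : ℝ) * N)) := by
    have habs : ∀ b : Fin N,
        |((Finset.univ.filter (fun x : Fin M => f x = b)).card : ℝ) / (M : ℝ)
          - 1 / (N : ℝ)|
        = if (b : ℕ) < s then ((N : ℝ) - s) / ((M : ℝ) * N) else (s : ℝ) / ((M : ℝ) * N) := by
      intro b
      rw [fiber_card M N hN f hf b, ← hs, ← hq]
      split_ifs with h
      · rw [abs_of_nonneg]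
        · push_cast
          rw [hsR]
          field_simp
          try ring
        · rw [sub_nonneg, div_le_div_iff₀ hN' hM']
          push_cast
          linarith
      · rw [abs_of_nonpos]
        · push_cast
          rw [hsR]
          field_simp
          try ring
        · rw [sub_nonpos, div_le_div_iff₀ hM' hN']
          push_cast
          linarith
    rw [Finset.sum_congr rfl (fun b _ => habs b)]
    rw [Finset.sum_ite, Finset.sum_const, Finset.sum_const]
    have hcard1 : (Finset.univ.filter (fun b : Fin N => (b : ℕ) < s)).card = s := by
      have e1 : (Finset.univ.filter (fun b : Fin N => (b : ℕ) < s)).card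
          = ((Finset.range N).filter (fun b => b < s)).card := by
        refine Finset.card_bij (s := Finset.univ.filter (fun b : Fin N => (b : ℕ) < s))
          (t := (Finset.range N).filter (fun b => b < s)) (fun b _ => (b : ℕ)) ?_ ?_ ?_
        · intro a ha
          simp only [Finset.mem_filter, Finset.mem_univ, true_and] at ha
          simp only [Finset.mem_filter, Finset.mem_range]
          exact ⟨a.isLt, ha⟩
        · intro a ha a' ha' h; exact Fin.ext h
        · intro y hy
          simp only [Finset.mem_filter, Finset.mem_range] at hy
          refine ⟨⟨y, hy.1⟩, ?_, rfl⟩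
          simp only [Finset.mem_filter, Finset.mem_univ, true_and]
          exact hy.2
      rw [e1]
      have e2 : (Finset.range N).filter (fun b => b < s) = Finset.range s := by
        ext x; simp; omega
      rw [e2, Finset.card_range]
    have hcard2 : (Finset.univ.filter (fun b : Fin N => ¬ (b : ℕ) < s)).card = N - s := by
      have := Finset.card_filter_add_card_filter_not
        (s := (Finset.univ : Finset (Fin N))) (p := fun b : Fin N => (b : ℕ) < s)
      simp only [Finset.card_univ, Fintype.card_fin] at this
      omega
    rw [hcard1, hcard2, nsmul_eq_mul, nsmul_eq_mul, Nat.cast_sub hsN.le]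
    ring
  have hineq : (s : ℝ) * ((N : ℝ) - s) / ((M : ℝ) * N) ≤ (N : ℝ) / (4 * M) := by
    rw [div_le_div_iff₀ (by positivity) (by positivity)]
    nlinarith [sq_nonneg ((N : ℝ) - 2 * s)]
  refine ⟨?_, ?_, ?_⟩
  · rw [hsum, key]; ring
  · rw [key]; exact hineq
  · unfold IsUniformMap
    simp only [Fintype.card_fin]
    rw [hsum]
    calc (1/2 : ℝ) * (2 * ((s : ℝ) * ((N : ℝ) - s) / ((M : ℝ) * N)))
        = (s : ℝ) * ((N : ℝ) - s) / ((M : ℝ) * N) := by ring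
      _ ≤ (N : ℝ) / (4 * M) := hineq
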